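/- Let (X,T) be a topological dynamical system and take the uniform system of coefficients c_S^n = 2^{−n}. Then the supremum over all finite open covers 𝒰 of X of the topological average sample complexity equals the topological entropy: sup_𝒰 Asc(X,𝒰,T) = h_top(X,T). -/

import Mathlib

open Set Filter Topology

/-- Minimal cardinality of a subcover of a family of sets covering `X`. -/
noncomputable def coverNum {X : Type*} (𝒰 : Set (Set X)) : ℕ :=
  sInf {m | ∃ F : Finset (Set X), ↑F ⊆ 𝒰 ∧ F.card = m ∧ ⋃₀ (F : Set (Set X)) = Set.univ}

/-- The join `⋁_{i ∈ S} T^{-i} 𝒰` of preimages of a cover along a set of times `S ⊆ n*`. -/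
def joinCover {X : Type*} (T : X → X) (𝒰 : Set (Set X)) {n : ℕ} (S : Finset (Fin n)) :
    Set (Set X) :=
  {V | ∃ f : Fin n → Set X, (∀ i, f i ∈ 𝒰) ∧ V = ⋂ i ∈ S, (T^[(i : ℕ)]) ⁻¹' f i}

namespace AscProof

variable {X : Type*}

def covSet (𝒲 : Set (Set X)) : Set ℕ :=
  {m | ∃ F : Finset (Set X), ↑F ⊆ 𝒲 ∧ F.card = m ∧ ⋃₀ (F : Set (Set X)) = Set.univ}

lemma coverNum_def (𝒲 : Set (Set X)) : coverNum 𝒲 = sInf (covSet 𝒲) := rfl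

lemma covSet_nonempty {𝒲 : Set (Set X)} (h : 𝒲.Finite) (hc : ⋃₀ 𝒲 = Set.univ) :
    (covSet 𝒲).Nonempty :=
  ⟨h.toFinset.card, h.toFinset, by simp, rfl, by rwa [Set.Finite.coe_toFinset]⟩

lemma coverNum_mem {𝒲 : Set (Set X)} (h : (covSet 𝒲).Nonempty) :
    coverNum 𝒲 ∈ covSet 𝒲 := Nat.sInf_mem h

lemma coverNum_le {𝒲 : Set (Set X)} {m : ℕ} (h : m ∈ covSet 𝒲) :
    coverNum 𝒲 ≤ m := Nat.sInf_le h

lemma one_le_coverNum [Nonempty X] {𝒲 : Set (Set X)} (h : (covSet 𝒲).Nonempty) :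
    1 ≤ coverNum 𝒲 := by
  obtain ⟨F, -, hcard, hcov⟩ := coverNum_mem h
  rcases Nat.eq_zero_or_pos (coverNum 𝒲) with h0 | h1
  · rw [h0] at hcard
    rw [Finset.card_eq_zero.mp hcard] at hcov
    simp only [Finset.coe_empty, Set.sUnion_empty] at hcov
    exact absurd hcov.symm (by simp [Set.eq_empty_iff_forall_notMem])
  · exact h1

lemma coverNum_le_coverNum {𝒱 𝒲 : Set (Set X)} (hW : (covSet 𝒲).Nonempty)
    (href : ∀ W ∈ 𝒲, ∃ V ∈ 𝒱, W ⊆ V) : coverNum 𝒱 ≤ coverNum 𝒲 := by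
  classical
  obtain ⟨F, hF, hcard, hcov⟩ := coverNum_mem hW
  set g : Set X → Set X := fun W => if h : ∃ V ∈ 𝒱, W ⊆ V then h.choose else ∅ with hg
  have hgmem : ∀ W ∈ 𝒲, g W ∈ 𝒱 ∧ W ⊆ g W := by
    intro W hWm
    have h := href W hWm
    rw [hg]; simp only [h, dif_pos]
    exact ⟨h.choose_spec.1, h.choose_spec.2⟩
  have : coverNum 𝒱 ≤ (F.image g).card := by
    refine coverNum_le ⟨F.image g, ?_, rfl, ?_⟩
    · intro V hV
      simp only [Finset.coe_image, Set.mem_image, Finset.mem_coe] at hV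
      obtain ⟨W, hWF, rfl⟩ := hV
      exact (hgmem W (hF hWF)).1
    · apply Set.eq_univ_of_univ_subset
      intro x _
      have : x ∈ ⋃₀ (F : Set (Set X)) := by rw [hcov]; trivial
      obtain ⟨W, hWF, hxW⟩ := this
      exact ⟨g W, by simpa using ⟨W, hWF, rfl⟩, (hgmem W (hF hWF)).2 hxW⟩
  calc coverNum 𝒱 ≤ (F.image g).card := this
    _ ≤ F.card := Finset.card_image_le
    _ = coverNum 𝒲 := hcard

lemma coverNum_mul {𝒱 𝒲 𝒵 : Set (Set X)} (hV : (covSet 𝒱).Nonempty)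
    (hW : (covSet 𝒲).Nonempty) (himg : ∀ V ∈ 𝒱, ∀ W ∈ 𝒲, V ∩ W ∈ 𝒵) :
    coverNum 𝒵 ≤ coverNum 𝒱 * coverNum 𝒲 := by
  classical
  obtain ⟨F, hF, hFcard, hFcov⟩ := coverNum_mem hV
  obtain ⟨G, hG, hGcard, hGcov⟩ := coverNum_mem hW
  have : coverNum 𝒵 ≤ (Finset.image₂ (· ∩ ·) F G).card := by
    refine coverNum_le ⟨_, ?_, rfl, ?_⟩
    · intro Z hZ
      simp only [Finset.coe_image₂, Set.mem_image2, Finset.mem_coe] at hZ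
      obtain ⟨V, hVF, W, hWG, rfl⟩ := hZ
      exact himg V (hF hVF) W (hG hWG)
    · apply Set.eq_univ_of_univ_subset
      intro x _
      have hx1 : x ∈ ⋃₀ (F : Set (Set X)) := by rw [hFcov]; trivial
      have hx2 : x ∈ ⋃₀ (G : Set (Set X)) := by rw [hGcov]; trivial
      obtain ⟨V, hVF, hxV⟩ := hx1
      obtain ⟨W, hWG, hxW⟩ := hx2
      exact ⟨V ∩ W, by simpa using Set.mem_image2_of_mem hVF hWG, hxV, hxW⟩
  calc coverNum 𝒵 ≤ _ := this
    _ ≤ F.card * G.card := Finset.card_image₂_le _ _ _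
    _ = _ := by rw [hFcard, hGcard]

lemma coverNum_preimage {Y : Type*} (g : Y → X) {𝒲 : Set (Set X)} {𝒵 : Set (Set Y)}
    (hW : (covSet 𝒲).Nonempty) (himg : ∀ W ∈ 𝒲, g ⁻¹' W ∈ 𝒵) :
    coverNum 𝒵 ≤ coverNum 𝒲 := by
  classical
  obtain ⟨F, hF, hFcard, hFcov⟩ := coverNum_mem hW
  have : coverNum 𝒵 ≤ (F.image (g ⁻¹' ·)).card := by
    refine coverNum_le ⟨_, ?_, rfl, ?_⟩
    · intro Z hZ
      simp only [Finset.coe_image, Set.mem_image, Finset.mem_coe] at hZ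
      obtain ⟨W, hWF, rfl⟩ := hZ
      exact himg W (hF hWF)
    · apply Set.eq_univ_of_univ_subset
      intro y _
      have hx : g y ∈ ⋃₀ (F : Set (Set X)) := by rw [hFcov]; trivial
      obtain ⟨W, hWF, hxW⟩ := hx
      exact ⟨g ⁻¹' W, by simpa using ⟨W, hWF, rfl⟩, hxW⟩
  calc coverNum 𝒵 ≤ _ := this
    _ ≤ F.card := Finset.card_image_le
    _ = _ := hFcard



variable {X : Type*}

def J (T : X → X) (𝒰 : Set (Set X)) (A : Finset ℕ) : Set (Set X) :=
  {V | ∃ f : ℕ → Set X, (∀ i ∈ A, f i ∈ 𝒰) ∧ V = ⋂ i ∈ A, (T^[i]) ⁻¹' f i}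

variable (T : X → X) (𝒰 : Set (Set X))

lemma J_empty : J T 𝒰 ∅ = {Set.univ} := by
  ext V; simp [J]

lemma J_insert {a : ℕ} {A : Finset ℕ} (ha : a ∉ A) :
    J T 𝒰 (insert a A) =
      Set.image2 (fun U W => (T^[a]) ⁻¹' U ∩ W) 𝒰 (J T 𝒰 A) := by
  classical
  ext V
  constructor
  · rintro ⟨f, hf, rfl⟩
    refine ⟨f a, hf a (Finset.mem_insert_self a A), ⋂ i ∈ A, (T^[i]) ⁻¹' f i,
      ⟨f, fun i hi => hf i (Finset.mem_insert_of_mem hi), rfl⟩, ?_⟩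
    rw [Finset.set_biInter_insert]
  · rintro ⟨U, hU, W, ⟨f, hf, rfl⟩, rfl⟩
    refine ⟨Function.update f a U, ?_, ?_⟩
    · intro i hi
      rcases Finset.mem_insert.mp hi with rfl | hi
      · simp [Function.update_self, hU]
      · rw [Function.update_of_ne (ne_of_mem_of_not_mem hi ha)]
        exact hf i hi
    · rw [Finset.set_biInter_insert, Function.update_self]
      show (T^[a]) ⁻¹' U ∩ (⋂ i ∈ A, (T^[i]) ⁻¹' f i) = _
      congr 1
      exact Set.iInter₂_congr fun i hi => by
        rw [Function.update_of_ne (ne_of_mem_of_not_mem hi ha)]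

lemma J_finite (h𝒰 : 𝒰.Finite) (A : Finset ℕ) : (J T 𝒰 A).Finite := by
  classical
  induction A using Finset.induction_on with
  | empty => rw [J_empty]; exact Set.finite_singleton _
  | @insert _ _ ha ih => rw [J_insert T 𝒰 ha]; exact Set.Finite.image2 _ h𝒰 ih

lemma J_sUnion (hc : ⋃₀ 𝒰 = Set.univ) (A : Finset ℕ) : ⋃₀ J T 𝒰 A = Set.univ := by
  classical
  induction A using Finset.induction_on with
  | empty => rw [J_empty]; simp
  | @insert a A ha ih =>
    rw [J_insert T 𝒰 ha]
    apply Set.eq_univ_of_univ_subset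
    intro x _
    have h1 : T^[a] x ∈ ⋃₀ 𝒰 := by rw [hc]; trivial
    obtain ⟨U, hU, hxU⟩ := h1
    have h2 : x ∈ ⋃₀ J T 𝒰 A := by rw [ih]; trivial
    obtain ⟨W, hW, hxW⟩ := h2
    exact ⟨_, Set.mem_image2_of_mem hU hW, hxU, hxW⟩

lemma J_covSet_nonempty (h𝒰 : 𝒰.Finite) (hc : ⋃₀ 𝒰 = Set.univ) (A : Finset ℕ) :
    (covSet (J T 𝒰 A)).Nonempty :=
  covSet_nonempty (J_finite T 𝒰 h𝒰 A) (J_sUnion T 𝒰 hc A)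

/-- `Nn T 𝒰 A = N(𝒰_A)` -/
noncomputable def Nn (T : X → X) (𝒰 : Set (Set X)) (A : Finset ℕ) : ℕ :=
  coverNum (J T 𝒰 A)

variable (h𝒰 : 𝒰.Finite) (hc : ⋃₀ 𝒰 = Set.univ)
include h𝒰 hc

lemma Nn_mono {A B : Finset ℕ} (hAB : A ⊆ B) : Nn T 𝒰 A ≤ Nn T 𝒰 B := by
  refine coverNum_le_coverNum (J_covSet_nonempty T 𝒰 h𝒰 hc B) ?_
  rintro W ⟨f, hf, rfl⟩
  refine ⟨⋂ i ∈ A, (T^[i]) ⁻¹' f i, ⟨f, fun i hi => hf i (hAB hi), rfl⟩, ?_⟩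
  intro x hx
  simp only [Set.mem_iInter] at hx ⊢
  exact fun i hi => hx i (hAB hi)

lemma Nn_union_le {A B : Finset ℕ} (hAB : Disjoint A B) :
    Nn T 𝒰 (A ∪ B) ≤ Nn T 𝒰 A * Nn T 𝒰 B := by
  classical
  refine coverNum_mul (J_covSet_nonempty T 𝒰 h𝒰 hc A) (J_covSet_nonempty T 𝒰 h𝒰 hc B) ?_
  rintro V ⟨f, hf, rfl⟩ W ⟨g, hg, rfl⟩
  refine ⟨fun i => if i ∈ A then f i else g i, ?_, ?_⟩
  · intro i hi
    rcases Finset.mem_union.mp hi with hi' | hi'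
    · simp [hi', hf i hi']
    · have : i ∉ A := fun hiA => (Finset.disjoint_left.mp hAB) hiA hi'
      simp [this, hg i hi']
  · rw [Finset.set_biInter_inter]
    congr 1
    · exact Set.iInter₂_congr fun i hi => by simp [hi]
    · refine Set.iInter₂_congr fun i hi => ?_
      have : i ∉ A := fun hiA => (Finset.disjoint_left.mp hAB) hiA hi
      simp [this]

lemma Nn_shift_le (n : ℕ) (A : Finset ℕ) :
    Nn T 𝒰 (A.image (n + ·)) ≤ Nn T 𝒰 A := by
  classical
  refine coverNum_preimage (T^[n]) (J_covSet_nonempty T 𝒰 h𝒰 hc A) ?_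
  rintro W ⟨f, hf, rfl⟩
  refine ⟨fun j => f (j - n), ?_, ?_⟩
  · intro j hj
    obtain ⟨i, hi, rfl⟩ := Finset.mem_image.mp hj
    simpa using hf i hi
  · ext x
    simp only [Set.mem_preimage, Set.mem_iInter, Finset.mem_image]
    have key : ∀ i, T^[n + i] x = T^[i] (T^[n] x) := fun i => by
      rw [Nat.add_comm, Function.iterate_add_apply]
    constructor
    · rintro h j ⟨i, hi, rfl⟩
      simpa [Nat.add_sub_cancel_left, key] using h i hi
    · intro h i hi
      simpa [Nat.add_sub_cancel_left, key] using h (n + i) ⟨i, hi, rfl⟩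

omit h𝒰 hc in
lemma J_singleton_zero : J T 𝒰 {0} = 𝒰 := by
  ext V
  constructor
  · rintro ⟨f, hf, rfl⟩
    simpa using hf 0 (Finset.mem_singleton_self 0)
  · intro hV
    exact ⟨fun _ => V, fun i hi => by simpa using hV, by simp⟩

lemma Nn_singleton_le (i : ℕ) : Nn T 𝒰 {i} ≤ coverNum 𝒰 := by
  have h1 : ({i} : Finset ℕ) = ({0} : Finset ℕ).image (i + ·) := by simp
  have h2 := Nn_shift_le T 𝒰 h𝒰 hc i {0}
  rw [← h1] at h2
  have h3 : Nn T 𝒰 {0} = coverNum 𝒰 := by unfold Nn; rw [J_singleton_zero]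
  rw [← h3]
  exact h2

lemma Nn_fill {A C : Finset ℕ} (hAC : Disjoint A C) :
    Nn T 𝒰 (A ∪ C) ≤ Nn T 𝒰 A * (coverNum 𝒰) ^ C.card := by
  classical
  induction C using Finset.induction_on with
  | empty => simp
  | @insert c C hcC ih =>
    have hd : Disjoint A C := hAC.mono_right (Finset.subset_insert c C)
    have hc' : c ∉ A ∪ C := by
      simp only [Finset.mem_union, not_or]
      exact ⟨fun h => Finset.disjoint_left.mp hAC h (Finset.mem_insert_self c C), hcC⟩
    have h1 : A ∪ insert c C = (A ∪ C) ∪ {c} := by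
      ext j; simp [Finset.mem_insert, Finset.mem_union]
    calc Nn T 𝒰 (A ∪ insert c C) = Nn T 𝒰 ((A ∪ C) ∪ {c}) := by rw [h1]
      _ ≤ Nn T 𝒰 (A ∪ C) * Nn T 𝒰 {c} :=
          Nn_union_le T 𝒰 h𝒰 hc (Finset.disjoint_singleton_right.mpr hc')
      _ ≤ (Nn T 𝒰 A * (coverNum 𝒰) ^ C.card) * coverNum 𝒰 :=
          Nat.mul_le_mul (ih hd) (Nn_singleton_le T 𝒰 h𝒰 hc c)
      _ = Nn T 𝒰 A * (coverNum 𝒰) ^ (insert c C).card := by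
          rw [Finset.card_insert_of_notMem hcC, pow_succ, mul_assoc]

lemma Nn_le_of_subset {A B : Finset ℕ} (hAB : A ⊆ B) :
    Nn T 𝒰 B ≤ Nn T 𝒰 A * (coverNum 𝒰) ^ (B \ A).card := by
  have h2 := Nn_fill T 𝒰 h𝒰 hc (Finset.disjoint_sdiff (s := A) (t := B))
  rwa [Finset.union_sdiff_of_subset hAB] at h2

lemma one_le_Nn [Nonempty X] (A : Finset ℕ) : 1 ≤ Nn T 𝒰 A :=
  one_le_coverNum (J_covSet_nonempty T 𝒰 h𝒰 hc A)



omit h𝒰 hc in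
/-- Splitting sums over powersets of `range (m+n)`. -/
lemma sum_powerset_split (m n : ℕ) (F : Finset ℕ → ℝ) :
    ∑ A ∈ (Finset.range (m + n)).powerset, F A
      = ∑ B ∈ (Finset.range m).powerset, ∑ C ∈ (Finset.range n).powerset,
          F (B ∪ C.image (m + ·)) := by
  classical
  rw [← Finset.sum_product']
  refine Finset.sum_nbij'
    (fun A => (A ∩ Finset.range m, (A \ Finset.range m).image (· - m)))
    (fun p => p.1 ∪ p.2.image (m + ·)) ?_ ?_ ?_ ?_ ?_
  · intro A hA
    simp only [Finset.mem_powerset] at hA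
    simp only [Finset.mem_product, Finset.mem_powerset]
    constructor
    · exact Finset.inter_subset_right
    · intro x hx
      simp only [Finset.mem_image, Finset.mem_sdiff, Finset.mem_range] at hx ⊢
      obtain ⟨z, ⟨hzA, hzm⟩, rfl⟩ := hx
      have := Finset.mem_range.mp (hA hzA)
      omega
  · intro p hp
    simp only [Finset.mem_product, Finset.mem_powerset] at hp
    simp only [Finset.mem_powerset]
    intro x hx
    simp only [Finset.mem_union, Finset.mem_image, Finset.mem_range] at hx ⊢
    rcases hx with hx | ⟨y, hy, rfl⟩
    · have := Finset.mem_range.mp (hp.1 hx); omega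
    · have := Finset.mem_range.mp (hp.2 hy); omega
  · intro A hA
    simp only [Finset.mem_powerset] at hA
    ext x
    simp only [Finset.mem_union, Finset.mem_image, Finset.mem_inter, Finset.mem_sdiff,
      Finset.mem_range]
    constructor
    · rintro (⟨hxA, -⟩ | ⟨y, ⟨z, ⟨hzA, hzm⟩, rfl⟩, rfl⟩)
      · exact hxA
      · have : m + (z - m) = z := by omega
        rwa [this]
    · intro hxA
      by_cases hxm : x < m
      · exact Or.inl ⟨hxA, hxm⟩
      · exact Or.inr ⟨x - m, ⟨x, ⟨hxA, hxm⟩, rfl⟩, by omega⟩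
  · intro p hp
    simp only [Finset.mem_product, Finset.mem_powerset] at hp
    obtain ⟨hp1, hp2⟩ := hp
    have e1 : (p.1 ∪ p.2.image (m + ·)) ∩ Finset.range m = p.1 := by
      ext x
      simp only [Finset.mem_inter, Finset.mem_union, Finset.mem_image, Finset.mem_range]
      constructor
      · rintro ⟨hx | ⟨y, hy, rfl⟩, hxm⟩
        · exact hx
        · omega
      · intro hx
        exact ⟨Or.inl hx, Finset.mem_range.mp (hp1 hx)⟩
    have e2 : ((p.1 ∪ p.2.image (m + ·)) \ Finset.range m).image (· - m) = p.2 := by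
      ext x
      simp only [Finset.mem_image, Finset.mem_sdiff, Finset.mem_union, Finset.mem_range]
      constructor
      · rintro ⟨z, ⟨hz | ⟨y, hy, rfl⟩, hzm⟩, rfl⟩
        · exact absurd (Finset.mem_range.mp (hp1 hz)) hzm
        · have : m + y - m = y := by omega
          rwa [this]
      · intro hx
        exact ⟨m + x, ⟨Or.inr ⟨x, hx, rfl⟩, by omega⟩, by omega⟩
    exact Prod.ext e1 e2
  · intro A hA
    simp only [Finset.mem_powerset] at hA
    congr 1
    -- F A = F ((A ∩ range m) ∪ ((A \ range m).image (· - m)).image (m + ·))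
    ext x
    simp only [Finset.mem_union, Finset.mem_image, Finset.mem_inter, Finset.mem_sdiff,
      Finset.mem_range]
    constructor
    · intro hxA
      by_cases hxm : x < m
      · exact Or.inl ⟨hxA, hxm⟩
      · exact Or.inr ⟨x - m, ⟨x, ⟨hxA, hxm⟩, rfl⟩, by omega⟩
    · rintro (⟨hxA, -⟩ | ⟨y, ⟨z, ⟨hzA, hzm⟩, rfl⟩, rfl⟩)
      · exact hxA
      · have : m + (z - m) = z := by omega
        rwa [this]

/-- entropy sequence -/
noncomputable def eSeq (T : X → X) (𝒰 : Set (Set X)) (n : ℕ) : ℝ :=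
  Real.log (Nn T 𝒰 (Finset.range n))

/-- average sample complexity sequence -/
noncomputable def aSeq (T : X → X) (𝒰 : Set (Set X)) (n : ℕ) : ℝ :=
  ∑ A ∈ (Finset.range n).powerset, (1 / 2 ^ n : ℝ) * Real.log (Nn T 𝒰 A)

variable [Nonempty X]

lemma Nn_cast_pos (A : Finset ℕ) : (0 : ℝ) < (Nn T 𝒰 A : ℝ) := by
  exact_mod_cast one_le_Nn T 𝒰 h𝒰 hc A

lemma log_Nn_nonneg (A : Finset ℕ) : 0 ≤ Real.log (Nn T 𝒰 A) :=
  Real.log_nonneg (by exact_mod_cast one_le_Nn T 𝒰 h𝒰 hc A)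

lemma log_Nn_mono {A B : Finset ℕ} (hAB : A ⊆ B) :
    Real.log (Nn T 𝒰 A) ≤ Real.log (Nn T 𝒰 B) :=
  Real.log_le_log (Nn_cast_pos T 𝒰 h𝒰 hc A) (by exact_mod_cast Nn_mono T 𝒰 h𝒰 hc hAB)

lemma log_Nn_union {A B : Finset ℕ} (hAB : Disjoint A B) :
    Real.log (Nn T 𝒰 (A ∪ B)) ≤ Real.log (Nn T 𝒰 A) + Real.log (Nn T 𝒰 B) := by
  have h1 : (0:ℝ) < (Nn T 𝒰 A : ℝ) * (Nn T 𝒰 B : ℝ) :=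
    mul_pos (Nn_cast_pos T 𝒰 h𝒰 hc A) (Nn_cast_pos T 𝒰 h𝒰 hc B)
  calc Real.log (Nn T 𝒰 (A ∪ B)) ≤ Real.log ((Nn T 𝒰 A : ℝ) * (Nn T 𝒰 B : ℝ)) := by
        apply Real.log_le_log (Nn_cast_pos T 𝒰 h𝒰 hc _)
        exact_mod_cast Nn_union_le T 𝒰 h𝒰 hc hAB
    _ = _ := Real.log_mul (ne_of_gt (Nn_cast_pos T 𝒰 h𝒰 hc A))
        (ne_of_gt (Nn_cast_pos T 𝒰 h𝒰 hc B))

lemma log_Nn_shift (n : ℕ) (A : Finset ℕ) :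
    Real.log (Nn T 𝒰 (A.image (n + ·))) ≤ Real.log (Nn T 𝒰 A) :=
  Real.log_le_log (Nn_cast_pos T 𝒰 h𝒰 hc _)
    (by exact_mod_cast Nn_shift_le T 𝒰 h𝒰 hc n A)

lemma eSeq_subadditive : Subadditive (eSeq T 𝒰) := by
  intro m n
  have hd : Disjoint (Finset.range m) ((Finset.range n).image (m + ·)) := by
    simp only [Finset.disjoint_left, Finset.mem_range, Finset.mem_image]
    rintro a ha ⟨y, hy, rfl⟩
    omega
  have hr : Finset.range (m + n) = Finset.range m ∪ (Finset.range n).image (m + ·) := by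
    ext x
    simp only [Finset.mem_range, Finset.mem_union, Finset.mem_image]
    constructor
    · intro hx
      by_cases hxm : x < m
      · exact Or.inl hxm
      · exact Or.inr ⟨x - m, by omega, by omega⟩
    · rintro (hx | ⟨y, hy, rfl⟩) <;> omega
  calc eSeq T 𝒰 (m + n)
      = Real.log (Nn T 𝒰 (Finset.range m ∪ (Finset.range n).image (m + ·))) := by
        rw [eSeq, hr]
    _ ≤ Real.log (Nn T 𝒰 (Finset.range m))
        + Real.log (Nn T 𝒰 ((Finset.range n).image (m + ·))) :=
        log_Nn_union T 𝒰 h𝒰 hc hd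
    _ ≤ eSeq T 𝒰 m + eSeq T 𝒰 n :=
        add_le_add le_rfl (log_Nn_shift T 𝒰 h𝒰 hc m _)

lemma eSeq_nonneg (n : ℕ) : 0 ≤ eSeq T 𝒰 n := log_Nn_nonneg T 𝒰 h𝒰 hc _

lemma eSeq_bddBelow : BddBelow (Set.range fun n => eSeq T 𝒰 n / n) := by
  refine ⟨0, ?_⟩
  rintro x ⟨n, rfl⟩
  exact div_nonneg (eSeq_nonneg T 𝒰 h𝒰 hc n) (Nat.cast_nonneg n)

lemma aSeq_nonneg (n : ℕ) : 0 ≤ aSeq T 𝒰 n :=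
  Finset.sum_nonneg fun A _ =>
    mul_nonneg (by positivity) (log_Nn_nonneg T 𝒰 h𝒰 hc A)

lemma aSeq_le_eSeq (n : ℕ) : aSeq T 𝒰 n ≤ eSeq T 𝒰 n := by
  calc aSeq T 𝒰 n
      ≤ ∑ A ∈ (Finset.range n).powerset, (1 / 2 ^ n : ℝ) * eSeq T 𝒰 n :=
        Finset.sum_le_sum fun A hA =>
          mul_le_mul_of_nonneg_left
            (log_Nn_mono T 𝒰 h𝒰 hc (Finset.mem_powerset.mp hA)) (by positivity)
    _ = ((2 : ℝ) ^ n) * ((1 / 2 ^ n : ℝ) * eSeq T 𝒰 n) := by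
        rw [Finset.sum_const, Finset.card_powerset, Finset.card_range, nsmul_eq_mul]
        norm_num
    _ = eSeq T 𝒰 n := by field_simp

lemma aSeq_subadditive : Subadditive (aSeq T 𝒰) := by
  intro m n
  classical
  rw [aSeq, sum_powerset_split m n]
  set c : ℝ := 1 / 2 ^ (m + n) with hcdef
  have hcpos : 0 ≤ c := by positivity
  have step1 : ∑ B ∈ (Finset.range m).powerset, ∑ C ∈ (Finset.range n).powerset,
        c * Real.log (Nn T 𝒰 (B ∪ C.image (m + ·)))
      ≤ ∑ B ∈ (Finset.range m).powerset, ∑ C ∈ (Finset.range n).powerset,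
        c * (Real.log (Nn T 𝒰 B) + Real.log (Nn T 𝒰 C)) := by
    refine Finset.sum_le_sum fun B hB => Finset.sum_le_sum fun C hC => ?_
    refine mul_le_mul_of_nonneg_left ?_ hcpos
    have hB' := Finset.mem_powerset.mp hB
    have hd : Disjoint B (C.image (m + ·)) := by
      simp only [Finset.disjoint_left, Finset.mem_image]
      rintro a ha ⟨y, hy, rfl⟩
      exact absurd (Finset.mem_range.mp (hB' ha)) (by omega)
    calc Real.log (Nn T 𝒰 (B ∪ C.image (m + ·)))
        ≤ Real.log (Nn T 𝒰 B) + Real.log (Nn T 𝒰 (C.image (m + ·))) :=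
          log_Nn_union T 𝒰 h𝒰 hc hd
      _ ≤ _ := add_le_add le_rfl (log_Nn_shift T 𝒰 h𝒰 hc m C)
  refine step1.trans (le_of_eq ?_)
  have hc1 : ((2 : ℝ) ^ n) * c = 1 / 2 ^ m := by
    rw [hcdef, pow_add]
    field_simp
    try ring
  have hc2 : ((2 : ℝ) ^ m) * c = 1 / 2 ^ n := by
    rw [hcdef, pow_add]
    field_simp
    try ring
  calc ∑ B ∈ (Finset.range m).powerset, ∑ C ∈ (Finset.range n).powerset,
        c * (Real.log (Nn T 𝒰 B) + Real.log (Nn T 𝒰 C))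
      = ∑ B ∈ (Finset.range m).powerset, (((2:ℝ)^n * c) * Real.log (Nn T 𝒰 B)
          + c * ∑ C ∈ (Finset.range n).powerset, Real.log (Nn T 𝒰 C)) := by
        refine Finset.sum_congr rfl fun B _ => ?_
        rw [Finset.mul_sum]
        simp only [mul_add]
        rw [Finset.sum_add_distrib, Finset.sum_const, Finset.card_powerset,
          Finset.card_range, nsmul_eq_mul]
        push_cast
        ring
    _ = (∑ B ∈ (Finset.range m).powerset, ((2:ℝ)^n * c) * Real.log (Nn T 𝒰 B))
          + ((2:ℝ)^m * c) * ∑ C ∈ (Finset.range n).powerset, Real.log (Nn T 𝒰 C) := by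
        rw [Finset.sum_add_distrib, Finset.sum_const, Finset.card_powerset,
          Finset.card_range, nsmul_eq_mul]
        push_cast
        ring
    _ = aSeq T 𝒰 m + aSeq T 𝒰 n := by
        rw [hc1, hc2, aSeq, aSeq, Finset.mul_sum]
        try simp only [Finset.mul_sum]

lemma aSeq_bddBelow : BddBelow (Set.range fun n => aSeq T 𝒰 n / n) := by
  refine ⟨0, ?_⟩
  rintro x ⟨n, rfl⟩
  exact div_nonneg (aSeq_nonneg T 𝒰 h𝒰 hc n) (Nat.cast_nonneg n)

lemma tendsto_eSeq :
    Tendsto (fun n : ℕ => eSeq T 𝒰 n / n) atTop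
      (𝓝 ((eSeq_subadditive T 𝒰 h𝒰 hc).lim)) :=
  (eSeq_subadditive T 𝒰 h𝒰 hc).tendsto_lim (eSeq_bddBelow T 𝒰 h𝒰 hc)

lemma tendsto_aSeq :
    Tendsto (fun n : ℕ => aSeq T 𝒰 n / n) atTop
      (𝓝 ((aSeq_subadditive T 𝒰 h𝒰 hc).lim)) :=
  (aSeq_subadditive T 𝒰 h𝒰 hc).tendsto_lim (aSeq_bddBelow T 𝒰 h𝒰 hc)

lemma aLim_le_eLim :
    (aSeq_subadditive T 𝒰 h𝒰 hc).lim ≤ (eSeq_subadditive T 𝒰 h𝒰 hc).lim := by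
  refine le_of_tendsto_of_tendsto' (tendsto_aSeq T 𝒰 h𝒰 hc) (tendsto_eSeq T 𝒰 h𝒰 hc)
    fun n => ?_
  rcases Nat.eq_zero_or_pos n with rfl | hn
  · simp
  · exact (div_le_div_iff_of_pos_right (by exact_mod_cast hn)).mpr (aSeq_le_eSeq T 𝒰 h𝒰 hc n)

lemma eLim_nonneg : 0 ≤ (eSeq_subadditive T 𝒰 h𝒰 hc).lim :=
  ge_of_tendsto (tendsto_eSeq T 𝒰 h𝒰 hc) (Eventually.of_forall fun n =>
    div_nonneg (eSeq_nonneg T 𝒰 h𝒰 hc n) (Nat.cast_nonneg n))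

lemma nsmul_eLim_le (n : ℕ) (hn : n ≠ 0) :
    (n : ℝ) * (eSeq_subadditive T 𝒰 h𝒰 hc).lim ≤ eSeq T 𝒰 n := by
  have h := (eSeq_subadditive T 𝒰 h𝒰 hc).lim_le_div (eSeq_bddBelow T 𝒰 h𝒰 hc) hn
  have hn' : (0:ℝ) < n := by positivity
  calc (n : ℝ) * _ ≤ (n:ℝ) * (eSeq T 𝒰 n / n) := by
        exact mul_le_mul_of_nonneg_left h (le_of_lt hn')
    _ = eSeq T 𝒰 n := by field_simp

omit h𝒰 hc in
lemma J_isOpen [TopologicalSpace X] (hT : Continuous T) (ho : ∀ U ∈ 𝒰, IsOpen U) (A : Finset ℕ) :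
    ∀ V ∈ J T 𝒰 A, IsOpen V := by
  classical
  induction A using Finset.induction_on with
  | empty =>
    rw [J_empty]
    rintro V rfl
    exact isOpen_univ
  | @insert a A ha ih =>
    rw [J_insert T 𝒰 ha]
    rintro V ⟨U, hU, W, hW, rfl⟩
    exact ((ho U hU).preimage (hT.iterate a)).inter (ih W hW)

/-- Claim A: the join of `𝒱 = 𝒰_{k*}` along `S` refines `𝒰_{S ⊕ k*}`. -/
lemma claimA (k : ℕ) (S : Finset ℕ) :
    Nn T 𝒰 (Finset.image₂ (· + ·) S (Finset.range k))
      ≤ Nn T (J T 𝒰 (Finset.range k)) S := by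
  classical
  refine coverNum_le_coverNum
    (J_covSet_nonempty T _ (J_finite T 𝒰 h𝒰 _) (J_sUnion T 𝒰 hc _) S) ?_
  rintro W ⟨g, hg, rfl⟩
  have hgi : ∀ i : ℕ, ∃ f : ℕ → Set X, i ∈ S →
      ((∀ j ∈ Finset.range k, f j ∈ 𝒰) ∧
        g i = ⋂ j ∈ Finset.range k, (T^[j]) ⁻¹' f j) := by
    intro i
    by_cases hi : i ∈ S
    · obtain ⟨f, hf1, hf2⟩ := hg i hi
      exact ⟨f, fun _ => ⟨hf1, hf2⟩⟩
    · exact ⟨fun _ => Set.univ, fun h => absurd h hi⟩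
  choose F hF using hgi
  have hpick : ∀ t : ℕ, ∃ p : ℕ × ℕ,
      t ∈ Finset.image₂ (· + ·) S (Finset.range k) →
        (p.1 ∈ S ∧ p.2 ∈ Finset.range k ∧ p.1 + p.2 = t) := by
    intro t
    by_cases ht : t ∈ Finset.image₂ (· + ·) S (Finset.range k)
    · obtain ⟨i, hi, j, hj, hij⟩ := Finset.mem_image₂.mp ht
      exact ⟨(i, j), fun _ => ⟨hi, hj, hij⟩⟩
    · exact ⟨(0, 0), fun h => absurd h ht⟩
  choose P hP using hpick
  refine ⟨⋂ t ∈ Finset.image₂ (· + ·) S (Finset.range k),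
    (T^[t]) ⁻¹' (F (P t).1 (P t).2), ⟨fun t => F (P t).1 (P t).2, ?_, rfl⟩, ?_⟩
  · intro t ht
    obtain ⟨h1, h2, -⟩ := hP t ht
    exact (hF (P t).1 h1).1 _ h2
  · intro x hx
    simp only [Set.mem_iInter, Set.mem_preimage] at hx ⊢
    intro t ht
    obtain ⟨h1, h2, h3⟩ := hP t ht
    have hx1 := hx (P t).1 h1
    rw [(hF (P t).1 h1).2] at hx1
    simp only [Set.mem_iInter, Set.mem_preimage] at hx1
    have hmem := hx1 (P t).2 h2
    have key : ∀ a b : ℕ, a + b = t → T^[b] (T^[a] x) = T^[t] x := by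
      rintro a b rfl
      rw [Nat.add_comm a b, Function.iterate_add_apply]
    rw [← key (P t).1 (P t).2 h3]
    exact hmem

omit h𝒰 hc in
/-- Claim B: the expected number of times in `range (n+k)` missed by `S ⊕ k*`. -/
lemma claimB (k n : ℕ) (hk : 1 ≤ k) :
    ∑ S ∈ (Finset.range n).powerset, (1 / 2 ^ n : ℝ) *
        ((Finset.range (n + k) \ Finset.image₂ (· + ·) S (Finset.range k)).card : ℝ)
      ≤ (n : ℝ) * (1 / 2 ^ k) + 2 * k := by
  classical
  set I : ℕ → Finset ℕ := fun t => (Finset.range n).filter (fun i => i ≤ t ∧ t < i + k)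
    with hI
  have cardeq : ∀ S ∈ (Finset.range n).powerset,
      ((Finset.range (n + k) \ Finset.image₂ (· + ·) S (Finset.range k)).card : ℝ)
        = ∑ t ∈ Finset.range (n + k),
            (if t ∈ Finset.image₂ (· + ·) S (Finset.range k) then (0:ℝ) else 1) := by
    intro S _
    rw [Finset.sdiff_eq_filter, Finset.card_filter]
    push_cast
    rw [Finset.sum_congr rfl]
    intro t _
    by_cases ht : t ∈ Finset.image₂ (· + ·) S (Finset.range k) <;> simp [ht]
  calc ∑ S ∈ (Finset.range n).powerset, (1 / 2 ^ n : ℝ) *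
        ((Finset.range (n + k) \ Finset.image₂ (· + ·) S (Finset.range k)).card : ℝ)
      = ∑ t ∈ Finset.range (n + k), ∑ S ∈ (Finset.range n).powerset, (1 / 2 ^ n : ℝ) *
          (if t ∈ Finset.image₂ (· + ·) S (Finset.range k) then (0:ℝ) else 1) := by
        rw [Finset.sum_comm]
        refine Finset.sum_congr rfl fun S hS => ?_
        rw [cardeq S hS, Finset.mul_sum]
    _ = ∑ t ∈ Finset.range (n + k), (1 / 2 ^ (I t).card : ℝ) := by
        refine Finset.sum_congr rfl fun t _ => ?_
        have hfilter : (Finset.range n).powerset.filter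
            (fun S => t ∉ Finset.image₂ (· + ·) S (Finset.range k))
            = (Finset.range n \ I t).powerset := by
          ext S
          constructor
          · intro hS
            obtain ⟨hS1, hS2⟩ := Finset.mem_filter.mp hS
            rw [Finset.mem_powerset] at hS1 ⊢
            intro i hiS
            rw [Finset.mem_sdiff]
            refine ⟨hS1 hiS, ?_⟩
            intro hiI
            simp only [hI, Finset.mem_filter, Finset.mem_range] at hiI
            obtain ⟨hin, hle, hlt⟩ := hiI
            exact hS2 (Finset.mem_image₂.mpr
              ⟨i, hiS, t - i, Finset.mem_range.mpr (by omega), by omega⟩)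
          · intro hS
            rw [Finset.mem_powerset] at hS
            rw [Finset.mem_filter, Finset.mem_powerset]
            refine ⟨fun i hiS => (Finset.mem_sdiff.mp (hS hiS)).1, ?_⟩
            intro ht
            obtain ⟨i, hiS, j, hj, hij⟩ := Finset.mem_image₂.mp ht
            rw [Finset.mem_range] at hj
            obtain ⟨hin, hnotI⟩ := Finset.mem_sdiff.mp (hS hiS)
            apply hnotI
            simp only [hI, Finset.mem_filter, Finset.mem_range]
            have hin' := Finset.mem_range.mp hin
            exact ⟨hin', by omega, by omega⟩
        calc ∑ S ∈ (Finset.range n).powerset, (1 / 2 ^ n : ℝ) *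
              (if t ∈ Finset.image₂ (· + ·) S (Finset.range k) then (0:ℝ) else 1)
            = ∑ S ∈ (Finset.range n).powerset.filter
                (fun S => t ∉ Finset.image₂ (· + ·) S (Finset.range k)), (1 / 2 ^ n : ℝ) := by
              rw [Finset.sum_filter]
              refine Finset.sum_congr rfl fun S _ => ?_
              by_cases ht : t ∈ Finset.image₂ (· + ·) S (Finset.range k) <;> simp [ht]
          _ = ((Finset.range n \ I t).powerset.card : ℝ) * (1 / 2 ^ n : ℝ) := by
              rw [hfilter, Finset.sum_const, nsmul_eq_mul]
          _ = (1 / 2 ^ (I t).card : ℝ) := by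
              rw [Finset.card_powerset, Finset.card_sdiff_of_subset (Finset.filter_subset _ _),
                Finset.card_range]
              have hle : (I t).card ≤ n := by
                simpa [hI] using Finset.card_filter_le (Finset.range n) _
              push_cast
              rw [pow_sub₀ (2:ℝ) (by norm_num) hle]
              field_simp
              try ring
    _ ≤ (n : ℝ) * (1 / 2 ^ k) + 2 * k := by
        have hsub : Finset.Ico (k - 1) n ⊆ Finset.range (n + k) := by
          intro t ht
          rw [Finset.mem_range]
          have := (Finset.mem_Ico.mp ht).2
          omega
        rw [← Finset.sum_sdiff hsub]
        have hbound1 : ∀ t ∈ Finset.Ico (k - 1) n, (1 / 2 ^ (I t).card : ℝ) ≤ 1 / 2 ^ k := by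
          intro t ht
          rw [Finset.mem_Ico] at ht
          have hIcard : k ≤ (I t).card := by
            have hsub2 : Finset.Ico (t + 1 - k) (t + 1) ⊆ I t := by
              intro i hi
              rw [Finset.mem_Ico] at hi
              simp only [hI, Finset.mem_filter, Finset.mem_range]
              omega
            calc k = (Finset.Ico (t + 1 - k) (t + 1)).card := by
                  rw [Nat.card_Ico]; omega
              _ ≤ (I t).card := Finset.card_le_card hsub2
          apply one_div_le_one_div_of_le (by positivity)
          exact pow_le_pow_right₀ (by norm_num) hIcard
        have hbound2 : ∀ t ∈ Finset.range (n + k) \ Finset.Ico (k - 1) n,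
            (1 / 2 ^ (I t).card : ℝ) ≤ 1 := by
          intro t _
          rw [div_le_one (by positivity)]
          exact one_le_pow₀ (by norm_num)
        have hcard2 : ((Finset.range (n + k) \ Finset.Ico (k - 1) n).card : ℝ) ≤ 2 * k := by
          have h1 : (Finset.range (n + k) \ Finset.Ico (k - 1) n).card ≤ 2 * k := by
            rw [Finset.card_sdiff_of_subset hsub, Nat.card_Ico, Finset.card_range]
            omega
          exact_mod_cast h1
        calc (∑ t ∈ Finset.range (n + k) \ Finset.Ico (k - 1) n, (1 / 2 ^ (I t).card : ℝ))
              + ∑ t ∈ Finset.Ico (k - 1) n, (1 / 2 ^ (I t).card : ℝ)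
            ≤ ((Finset.range (n + k) \ Finset.Ico (k - 1) n).card : ℝ) * 1
              + ((Finset.Ico (k - 1) n).card : ℝ) * (1 / 2 ^ k) := by
              refine add_le_add ?_ ?_
              · calc _ ≤ (Finset.range (n + k) \ Finset.Ico (k - 1) n).card • (1:ℝ) :=
                    Finset.sum_le_card_nsmul _ _ _ hbound2
                  _ = _ := by rw [nsmul_eq_mul]
              · calc _ ≤ (Finset.Ico (k - 1) n).card • ((1 / 2 ^ k : ℝ)) :=
                    Finset.sum_le_card_nsmul _ _ _ hbound1
                  _ = _ := by rw [nsmul_eq_mul]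
          _ ≤ 2 * (k:ℝ) + (n : ℝ) * (1 / 2 ^ k) := by
              refine add_le_add (by simpa using hcard2) ?_
              refine mul_le_mul_of_nonneg_right ?_ (by positivity)
              rw [Nat.card_Ico]
              exact_mod_cast Nat.sub_le n (k - 1)
          _ = (n : ℝ) * (1 / 2 ^ k) + 2 * k := by ring

lemma log_Nn_lower (k n : ℕ) (S : Finset ℕ) (hS : S ⊆ Finset.range n) :
    eSeq T 𝒰 (n + k)
      - ((Finset.range (n + k) \ Finset.image₂ (· + ·) S (Finset.range k)).card : ℝ)
          * Real.log (coverNum 𝒰)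
      ≤ Real.log (Nn T 𝒰 (Finset.image₂ (· + ·) S (Finset.range k))) := by
  have hDsub : Finset.image₂ (· + ·) S (Finset.range k) ⊆ Finset.range (n + k) := by
    intro t ht
    obtain ⟨i, hi, j, hj, rfl⟩ := Finset.mem_image₂.mp ht
    have h1 := Finset.mem_range.mp (hS hi)
    have h2 := Finset.mem_range.mp hj
    rw [Finset.mem_range]
    omega
  have h1 := Nn_le_of_subset T 𝒰 h𝒰 hc hDsub
  have hM : (1:ℝ) ≤ (coverNum 𝒰 : ℝ) := by
    exact_mod_cast one_le_coverNum (covSet_nonempty h𝒰 hc)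
  have hMpos : (0:ℝ) < (coverNum 𝒰 : ℝ) := lt_of_lt_of_le one_pos hM
  have hD : (0:ℝ) < (Nn T 𝒰 (Finset.image₂ (· + ·) S (Finset.range k)) : ℝ) :=
    Nn_cast_pos T 𝒰 h𝒰 hc _
  have h2 : Real.log (Nn T 𝒰 (Finset.range (n + k)))
      ≤ Real.log (Nn T 𝒰 (Finset.image₂ (· + ·) S (Finset.range k)))
        + ((Finset.range (n + k) \ Finset.image₂ (· + ·) S (Finset.range k)).card : ℝ)
          * Real.log (coverNum 𝒰) := by
    calc Real.log (Nn T 𝒰 (Finset.range (n + k)))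
        ≤ Real.log ((Nn T 𝒰 (Finset.image₂ (· + ·) S (Finset.range k)) : ℝ)
            * (coverNum 𝒰 : ℝ) ^ (Finset.range (n + k)
                \ Finset.image₂ (· + ·) S (Finset.range k)).card) := by
          apply Real.log_le_log (Nn_cast_pos T 𝒰 h𝒰 hc _)
          exact_mod_cast h1
      _ = _ := by
          rw [Real.log_mul (ne_of_gt hD) (by positivity), Real.log_pow]
  have : eSeq T 𝒰 (n + k) = Real.log (Nn T 𝒰 (Finset.range (n + k))) := rfl
  linarith

lemma claimC (k n : ℕ) (hk : 1 ≤ k) :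
    eSeq T 𝒰 (n + k) - Real.log (coverNum 𝒰) * ((n : ℝ) * (1 / 2 ^ k) + 2 * k)
      ≤ aSeq T (J T 𝒰 (Finset.range k)) n := by
  classical
  have hlogM : 0 ≤ Real.log (coverNum 𝒰) := by
    apply Real.log_nonneg
    exact_mod_cast one_le_coverNum (covSet_nonempty h𝒰 hc)
  have step : ∀ S ∈ (Finset.range n).powerset,
      (1 / 2 ^ n : ℝ) * (eSeq T 𝒰 (n + k)
        - ((Finset.range (n + k) \ Finset.image₂ (· + ·) S (Finset.range k)).card : ℝ)
            * Real.log (coverNum 𝒰))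
      ≤ (1 / 2 ^ n : ℝ) * Real.log (Nn T (J T 𝒰 (Finset.range k)) S) := by
    intro S hS
    refine mul_le_mul_of_nonneg_left ?_ (by positivity)
    refine le_trans (log_Nn_lower T 𝒰 h𝒰 hc k n S (Finset.mem_powerset.mp hS)) ?_
    exact Real.log_le_log (Nn_cast_pos T 𝒰 h𝒰 hc _)
      (by exact_mod_cast claimA T 𝒰 h𝒰 hc k S)
  calc eSeq T 𝒰 (n + k) - Real.log (coverNum 𝒰) * ((n : ℝ) * (1 / 2 ^ k) + 2 * k)
      ≤ eSeq T 𝒰 (n + k) - Real.log (coverNum 𝒰) *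
          (∑ S ∈ (Finset.range n).powerset, (1 / 2 ^ n : ℝ) *
            ((Finset.range (n + k) \ Finset.image₂ (· + ·) S (Finset.range k)).card : ℝ)) := by
        have hB := claimB k n hk
        nlinarith [mul_le_mul_of_nonneg_left hB hlogM]
    _ = ∑ S ∈ (Finset.range n).powerset, (1 / 2 ^ n : ℝ) * (eSeq T 𝒰 (n + k)
          - ((Finset.range (n + k) \ Finset.image₂ (· + ·) S (Finset.range k)).card : ℝ)
              * Real.log (coverNum 𝒰)) := by
        simp only [mul_sub]
        rw [Finset.sum_sub_distrib, Finset.sum_const, Finset.card_powerset,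
          Finset.card_range, nsmul_eq_mul, Finset.mul_sum]
        congr 1
        · push_cast
          field_simp
        · exact Finset.sum_congr rfl fun S _ => by ring
    _ ≤ ∑ S ∈ (Finset.range n).powerset,
          (1 / 2 ^ n : ℝ) * Real.log (Nn T (J T 𝒰 (Finset.range k)) S) :=
        Finset.sum_le_sum step
    _ = aSeq T (J T 𝒰 (Finset.range k)) n := rfl

lemma eLim_sub_le_aLim (k : ℕ) (hk : 1 ≤ k)
    (h𝒱 : (J T 𝒰 (Finset.range k)).Finite)
    (hc𝒱 : ⋃₀ (J T 𝒰 (Finset.range k)) = Set.univ) :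
    (eSeq_subadditive T 𝒰 h𝒰 hc).lim - Real.log (coverNum 𝒰) * (1 / 2 ^ k)
      ≤ (aSeq_subadditive T (J T 𝒰 (Finset.range k)) h𝒱 hc𝒱).lim := by
  set r := (eSeq_subadditive T 𝒰 h𝒰 hc).lim with hr
  set L := Real.log (coverNum 𝒰) with hL
  have htf : Tendsto (fun n : ℕ => r - L * (1 / 2 ^ k) + ((k : ℝ) * r - L * (2 * k)) / n)
      atTop (𝓝 (r - L * (1 / 2 ^ k))) := by
    have h0 : Tendsto (fun n : ℕ => ((k : ℝ) * r - L * (2 * k)) / n) atTop (𝓝 0) :=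
      tendsto_const_div_atTop_nhds_zero_nat _
    simpa using tendsto_const_nhds.add h0
  refine le_of_tendsto_of_tendsto htf
    (tendsto_aSeq T (J T 𝒰 (Finset.range k)) h𝒱 hc𝒱) ?_
  filter_upwards [eventually_ge_atTop 1] with n hn
  have hn' : (0:ℝ) < n := by exact_mod_cast hn
  have h1 : ((n + k : ℕ) : ℝ) * r ≤ eSeq T 𝒰 (n + k) :=
    nsmul_eLim_le T 𝒰 h𝒰 hc (n + k) (by omega)
  have h2 := claimC T 𝒰 h𝒰 hc k n hk
  have h3 : ((n:ℝ) + k) * r - L * ((n : ℝ) * (1 / 2 ^ k) + 2 * k)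
      ≤ aSeq T (J T 𝒰 (Finset.range k)) n := by
    push_cast at h1
    linarith
  have h4 : r - L * (1 / 2 ^ k) + ((k : ℝ) * r - L * (2 * k)) / n
      = (((n:ℝ) + k) * r - L * ((n : ℝ) * (1 / 2 ^ k) + 2 * k)) / n := by
    field_simp
    ring
  rw [h4]
  exact (div_le_div_iff_of_pos_right hn').mpr h3

omit h𝒰 hc in
lemma joinCover_eq (h : 𝒰.Nonempty) {n : ℕ} (S : Finset (Fin n)) :
    joinCover T 𝒰 S = J T 𝒰 (S.image Fin.val) := by
  classical
  obtain ⟨U₀, hU₀⟩ := h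
  ext V
  constructor
  · rintro ⟨f, hf, rfl⟩
    refine ⟨fun j => if hj : j < n then f ⟨j, hj⟩ else U₀, ?_, ?_⟩
    · intro j hj
      obtain ⟨i, hi, rfl⟩ := Finset.mem_image.mp hj
      simpa [i.isLt] using hf i
    · rw [Finset.set_biInter_finset_image]
      exact Set.iInter₂_congr fun i hi => by simp [i.isLt]
  · rintro ⟨g, hg, rfl⟩
    refine ⟨fun i => if i ∈ S then g i.val else U₀, ?_, ?_⟩
    · intro i
      by_cases hi : i ∈ S
      · simp only [if_pos hi]
        exact hg i.val (Finset.mem_image_of_mem Fin.val hi)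
      · simp [hi, hU₀]
    · rw [Finset.set_biInter_finset_image]
      exact Set.iInter₂_congr fun i hi => by simp [hi]

omit h𝒰 hc in
lemma sum_fin_finsets (n : ℕ) (G : Finset ℕ → ℝ) :
    ∑ S : Finset (Fin n), G (S.image Fin.val)
      = ∑ A ∈ (Finset.range n).powerset, G A := by
  classical
  refine Finset.sum_nbij' (fun S => S.image Fin.val)
    (fun A => Finset.univ.filter (fun i : Fin n => (i : ℕ) ∈ A)) ?_ ?_ ?_ ?_ ?_
  · intro S _
    rw [Finset.mem_powerset]
    intro j hj
    obtain ⟨i, -, rfl⟩ := Finset.mem_image.mp hj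
    exact Finset.mem_range.mpr i.isLt
  · intro A _
    exact Finset.mem_univ _
  · intro S _
    ext i
    simp only [Finset.mem_filter, Finset.mem_univ, true_and, Finset.mem_image]
    constructor
    · rintro ⟨i', hi', h⟩
      rwa [← Fin.val_injective h]
    · intro hi
      exact ⟨i, hi, rfl⟩
  · intro A hA
    rw [Finset.mem_powerset] at hA
    ext j
    simp only [Finset.mem_image, Finset.mem_filter, Finset.mem_univ, true_and]
    constructor
    · rintro ⟨i, hi, rfl⟩
      exact hi
    · intro hj
      exact ⟨⟨j, Finset.mem_range.mp (hA hj)⟩, hj, rfl⟩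
  · intro S _
    rfl

omit h𝒰 hc in
lemma image_univ_val (n : ℕ) :
    (Finset.univ : Finset (Fin n)).image Fin.val = Finset.range n := by
  ext j
  simp only [Finset.mem_image, Finset.mem_univ, true_and, Finset.mem_range]
  constructor
  · rintro ⟨i, rfl⟩
    exact i.isLt
  · intro hj
    exact ⟨⟨j, hj⟩, rfl⟩

omit h𝒰 hc in
lemma aexpr_eq (h : 𝒰.Nonempty) (n : ℕ) :
    (1 / (n : ℝ)) * ∑ S : Finset (Fin n), (1 / 2 ^ n : ℝ) *
        Real.log (coverNum (joinCover T 𝒰 S))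
      = aSeq T 𝒰 n / n := by
  rw [one_div_mul_eq_div]
  congr 1
  have hd : aSeq T 𝒰 n
      = ∑ A ∈ (Finset.range n).powerset, (1 / 2 ^ n : ℝ) * Real.log (Nn T 𝒰 A) := rfl
  rw [hd, ← sum_fin_finsets n (fun A => (1 / 2 ^ n : ℝ) * Real.log (Nn T 𝒰 A))]
  refine Finset.sum_congr rfl fun S _ => ?_
  rw [joinCover_eq T 𝒰 h S]
  rfl

omit h𝒰 hc in
lemma eexpr_eq (h : 𝒰.Nonempty) (n : ℕ) :
    Real.log (coverNum (joinCover T 𝒰 (Finset.univ : Finset (Fin n)))) = eSeq T 𝒰 n := by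
  rw [joinCover_eq T 𝒰 h, image_univ_val]
  rfl

end AscProof

open AscProof

/-- with uniform coefficients `c_S^n = 2^{-n}`, the supremum over all finite
open covers `𝒰` of the topological average sample complexity `Asc(X,𝒰,T)` equals the
topological entropy `h_top(X,T) = sup_𝒰 h_top(X,𝒰,T)`. -/
theorem sup_asc_eq_topological_entropy
    {X : Type*} [MetricSpace X] [CompactSpace X] (T : X → X) (hT : Continuous T) :
    sSup {a : EReal | ∃ 𝒰 : Set (Set X), 𝒰.Finite ∧ (∀ U ∈ 𝒰, IsOpen U) ∧
        ⋃₀ 𝒰 = Set.univ ∧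
        ∃ r : ℝ, Tendsto (fun n : ℕ =>
            (1 / (n : ℝ)) * ∑ S : Finset (Fin n), (1 / 2 ^ n : ℝ) *
              Real.log (coverNum (joinCover T 𝒰 S))) atTop (𝓝 r) ∧ a = (r : EReal)}
      =
    sSup {e : EReal | ∃ 𝒰 : Set (Set X), 𝒰.Finite ∧ (∀ U ∈ 𝒰, IsOpen U) ∧
        ⋃₀ 𝒰 = Set.univ ∧
        ∃ r : ℝ, Tendsto (fun n : ℕ =>
            Real.log (coverNum (joinCover T 𝒰 (Finset.univ : Finset (Fin n)))) / (n : ℝ))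
          atTop (𝓝 r) ∧ e = (r : EReal)} := by
  classical
  rcases isEmpty_or_nonempty X with hX | hX
  · -- empty space : both sets are {0}
    have huniv : (Set.univ : Set X) = ∅ := Set.univ_eq_empty_iff.mpr hX
    have hcov0 : ∀ 𝒲 : Set (Set X), coverNum 𝒲 = 0 := by
      intro 𝒲
      have h0 : 0 ∈ {m | ∃ F : Finset (Set X), ↑F ⊆ 𝒲 ∧ F.card = 0 ∧
          ⋃₀ (F : Set (Set X)) = Set.univ} :=
        ⟨∅, by simp, by simp, by simp [huniv]⟩
      exact Nat.le_zero.mp (Nat.sInf_le h0)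
    have hLz : ∀ (𝒰 : Set (Set X)) (n : ℕ),
        (1 / (n : ℝ)) * ∑ S : Finset (Fin n), (1 / 2 ^ n : ℝ) *
          Real.log (coverNum (joinCover T 𝒰 S)) = 0 := by
      intro 𝒰 n
      simp [hcov0]
    have hRz : ∀ (𝒰 : Set (Set X)) (n : ℕ),
        Real.log (coverNum (joinCover T 𝒰 (Finset.univ : Finset (Fin n)))) / (n : ℝ) = 0 := by
      intro 𝒰 n
      simp [hcov0]
    have hL : {a : EReal | ∃ 𝒰 : Set (Set X), 𝒰.Finite ∧ (∀ U ∈ 𝒰, IsOpen U) ∧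
        ⋃₀ 𝒰 = Set.univ ∧
        ∃ r : ℝ, Tendsto (fun n : ℕ =>
            (1 / (n : ℝ)) * ∑ S : Finset (Fin n), (1 / 2 ^ n : ℝ) *
              Real.log (coverNum (joinCover T 𝒰 S))) atTop (𝓝 r) ∧ a = (r : EReal)}
        = {(0 : EReal)} := by
      ext a
      simp only [Set.mem_setOf_eq, Set.mem_singleton_iff]
      constructor
      · rintro ⟨𝒰, -, -, -, r, hr, rfl⟩
        have h1 : Tendsto (fun _ : ℕ => (0:ℝ)) atTop (𝓝 r) :=
          hr.congr (fun n => hLz 𝒰 n)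
        have : r = 0 := tendsto_nhds_unique h1 tendsto_const_nhds
        rw [this]; rfl
      · rintro rfl
        refine ⟨∅, Set.finite_empty, by simp, by simp [huniv], 0, ?_, rfl⟩
        exact tendsto_const_nhds.congr (fun n => (hLz ∅ n).symm)
    have hR : {e : EReal | ∃ 𝒰 : Set (Set X), 𝒰.Finite ∧ (∀ U ∈ 𝒰, IsOpen U) ∧
        ⋃₀ 𝒰 = Set.univ ∧
        ∃ r : ℝ, Tendsto (fun n : ℕ =>
            Real.log (coverNum (joinCover T 𝒰 (Finset.univ : Finset (Fin n)))) / (n : ℝ))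
          atTop (𝓝 r) ∧ e = (r : EReal)} = {(0 : EReal)} := by
      ext e
      simp only [Set.mem_setOf_eq, Set.mem_singleton_iff]
      constructor
      · rintro ⟨𝒰, -, -, -, r, hr, rfl⟩
        have h1 : Tendsto (fun _ : ℕ => (0:ℝ)) atTop (𝓝 r) :=
          hr.congr (fun n => hRz 𝒰 n)
        have : r = 0 := tendsto_nhds_unique h1 tendsto_const_nhds
        rw [this]; rfl
      · rintro rfl
        refine ⟨∅, Set.finite_empty, by simp, by simp [huniv], 0, ?_, rfl⟩
        exact tendsto_const_nhds.congr (fun n => (hRz ∅ n).symm)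
    rw [hL, hR]
  · -- nonempty space
    apply le_antisymm
    · apply sSup_le
      rintro a ⟨𝒰, hfin, hop, hcov, r, hr, rfl⟩
      have hne : 𝒰.Nonempty := by
        obtain ⟨x⟩ := hX
        have hx : x ∈ ⋃₀ 𝒰 := by rw [hcov]; trivial
        obtain ⟨U, hU, -⟩ := hx
        exact ⟨U, hU⟩
      have h1 : Tendsto (fun n : ℕ => aSeq T 𝒰 n / n) atTop (𝓝 r) :=
        hr.congr (fun n => aexpr_eq T 𝒰 hne n)
      have hreq : r = (aSeq_subadditive T 𝒰 hfin hcov).lim :=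
        tendsto_nhds_unique h1 (tendsto_aSeq T 𝒰 hfin hcov)
      refine le_sSup_of_le (b := (((eSeq_subadditive T 𝒰 hfin hcov).lim : ℝ) : EReal)) ?_ ?_
      · refine ⟨𝒰, hfin, hop, hcov, _, ?_, rfl⟩
        refine (tendsto_eSeq T 𝒰 hfin hcov).congr (fun n => ?_)
        rw [eexpr_eq T 𝒰 hne n]
      · have h2 : r ≤ (eSeq_subadditive T 𝒰 hfin hcov).lim := by
          rw [hreq]
          exact aLim_le_eLim T 𝒰 hfin hcov
        exact_mod_cast h2
    · apply sSup_le
      rintro e ⟨𝒰, hfin, hop, hcov, r, hr, rfl⟩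
      have hne : 𝒰.Nonempty := by
        obtain ⟨x⟩ := hX
        have hx : x ∈ ⋃₀ 𝒰 := by rw [hcov]; trivial
        obtain ⟨U, hU, -⟩ := hx
        exact ⟨U, hU⟩
      have h1 : Tendsto (fun n : ℕ => eSeq T 𝒰 n / n) atTop (𝓝 r) := by
        refine hr.congr (fun n => ?_)
        rw [eexpr_eq T 𝒰 hne n]
      have hreq : r = (eSeq_subadditive T 𝒰 hfin hcov).lim :=
        tendsto_nhds_unique h1 (tendsto_eSeq T 𝒰 hfin hcov)
      have key : ∀ k : ℕ,
          ((r - Real.log (coverNum 𝒰) * (1 / 2 ^ (k+1)) : ℝ) : EReal)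
            ≤ sSup {a : EReal | ∃ 𝒰 : Set (Set X), 𝒰.Finite ∧ (∀ U ∈ 𝒰, IsOpen U) ∧
                ⋃₀ 𝒰 = Set.univ ∧
                ∃ r : ℝ, Tendsto (fun n : ℕ =>
                    (1 / (n : ℝ)) * ∑ S : Finset (Fin n), (1 / 2 ^ n : ℝ) *
                      Real.log (coverNum (joinCover T 𝒰 S))) atTop (𝓝 r) ∧
                  a = (r : EReal)} := by
        intro k
        have h𝒱fin := J_finite T 𝒰 hfin (Finset.range (k+1))
        have h𝒱cov := J_sUnion T 𝒰 hcov (Finset.range (k+1))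
        have h𝒱op := J_isOpen T 𝒰 hT hop (Finset.range (k+1))
        have h𝒱ne : (J T 𝒰 (Finset.range (k+1))).Nonempty := by
          obtain ⟨x⟩ := hX
          have hx : x ∈ ⋃₀ (J T 𝒰 (Finset.range (k+1))) := by rw [h𝒱cov]; trivial
          obtain ⟨V, hV, -⟩ := hx
          exact ⟨V, hV⟩
        refine le_sSup_of_le
          (b := (((aSeq_subadditive T (J T 𝒰 (Finset.range (k+1))) h𝒱fin h𝒱cov).lim : ℝ)
            : EReal)) ?_ ?_
        · refine ⟨J T 𝒰 (Finset.range (k+1)), h𝒱fin, h𝒱op, h𝒱cov, _, ?_, rfl⟩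
          exact (tendsto_aSeq T _ h𝒱fin h𝒱cov).congr
            (fun n => (aexpr_eq T _ h𝒱ne n).symm)
        · have h3 := eLim_sub_le_aLim T 𝒰 hfin hcov (k+1) (by omega) h𝒱fin h𝒱cov
          rw [← hreq] at h3
          exact_mod_cast h3
      have htend : Tendsto
          (fun k : ℕ => ((r - Real.log (coverNum 𝒰) * (1 / 2 ^ (k+1)) : ℝ) : EReal))
          atTop (𝓝 ((r : ℝ) : EReal)) := by
        rw [EReal.tendsto_coe]
        have hg : Tendsto (fun k : ℕ => (1:ℝ) / 2 ^ (k+1)) atTop (𝓝 0) := by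
          have hp : Tendsto (fun k : ℕ => ((1:ℝ)/2) ^ k) atTop (𝓝 0) :=
            tendsto_pow_atTop_nhds_zero_of_lt_one (by norm_num) (by norm_num)
          have := hp.comp (tendsto_add_atTop_nat 1)
          refine this.congr (fun k => ?_)
          simp [div_pow, Function.comp]
        have h5 : Tendsto (fun k : ℕ => r - Real.log (coverNum 𝒰) * (1 / 2 ^ (k+1)))
            atTop (𝓝 (r - Real.log (coverNum 𝒰) * 0)) :=
          (tendsto_const_nhds (x := r)).sub
            ((tendsto_const_nhds (x := Real.log (coverNum 𝒰))).mul hg)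
        simpa using h5
      exact le_of_tendsto htend (Eventually.of_forall key)
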